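/- For every kernel g of ℓ dimensions there exists a kernel g' of ℓ dimensions whose partial distance sequence is non-decreasing (D_{g'}(0) ≤ D_{g'}(1) ≤ ⋯ ≤ D_{g'}(ℓ−1)) and which satisfies ∏_{i=0}^{ℓ−1} D_{g'}(i) ≥ ∏_{i=0}^{ℓ−1} D_g(i); in particular E(g') ≥ E(g). -/

import Mathlib

/-- The `i`-th partial distance of a kernel `g` of `ℓ` dimensions:
`D_g(i) = min { d_H(g(w•0•u), g(w•1•v)) : w ∈ {0,1}^i, u, v ∈ {0,1}^{ℓ−1−i} }`,
phrased via pairs of inputs that agree on coordinates `< i` and differ as `0`/`1`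
at coordinate `i`. -/
noncomputable def partialDist {ℓ : ℕ} (g : (Fin ℓ → ZMod 2) → (Fin ℓ → ZMod 2)) (i : ℕ) : ℕ :=
  sInf { d | ∃ x y : Fin ℓ → ZMod 2,
    (∀ j : Fin ℓ, (j : ℕ) < i → x j = y j) ∧
    (∀ j : Fin ℓ, (j : ℕ) = i → x j = 0 ∧ y j = 1) ∧
    d = hammingDist (g x) (g y) }

namespace PDaux

variable {ℓ : ℕ}

def S (g : (Fin ℓ → ZMod 2) → (Fin ℓ → ZMod 2)) (i : ℕ) : Set ℕ :=
  { d | ∃ x y : Fin ℓ → ZMod 2,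
    (∀ j : Fin ℓ, (j : ℕ) < i → x j = y j) ∧
    (∀ j : Fin ℓ, (j : ℕ) = i → x j = 0 ∧ y j = 1) ∧
    d = hammingDist (g x) (g y) }

lemma pd_eq (g : (Fin ℓ → ZMod 2) → (Fin ℓ → ZMod 2)) (i : ℕ) :
    partialDist g i = sInf (S g i) := rfl

lemma S_nonempty (g : (Fin ℓ → ZMod 2) → (Fin ℓ → ZMod 2)) (i : ℕ) : (S g i).Nonempty := by
  refine ⟨_, (fun _ => 0), (fun j => if (j:ℕ) = i then 1 else 0), ?_, ?_, rfl⟩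
  · intro j hj
    simp [Nat.ne_of_lt hj]
  · intro j hj
    simp [hj]

lemma pd_le_card (g : (Fin ℓ → ZMod 2) → (Fin ℓ → ZMod 2)) (i : ℕ) : partialDist g i ≤ ℓ := by
  obtain ⟨d, hd⟩ := S_nonempty g i
  have h1 : partialDist g i ≤ d := Nat.sInf_le hd
  obtain ⟨x, y, -, -, rfl⟩ := hd
  refine h1.trans ?_
  calc hammingDist (g x) (g y) ≤ Fintype.card (Fin ℓ) := hammingDist_le_card_fintype
    _ = ℓ := Fintype.card_fin ℓ

/-- precompose with a permutation of coordinates -/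
def pre (σ : Equiv.Perm (Fin ℓ)) (x : Fin ℓ → ZMod 2) : Fin ℓ → ZMod 2 := fun j => x (σ j)

lemma pre_pre (σ : Equiv.Perm (Fin ℓ)) (x : Fin ℓ → ZMod 2) :
    pre σ.symm (pre σ x) = x := by
  funext j; simp [pre]

lemma pre_bijective (σ : Equiv.Perm (Fin ℓ)) : Function.Bijective (pre (ℓ := ℓ) σ) := by
  refine Function.bijective_iff_has_inverse.mpr ⟨pre σ.symm, ?_, ?_⟩
  · intro x; funext j; simp [pre]
  · intro x; funext j; simp [pre]

section Swap

variable {i : ℕ} (hi : i + 1 < ℓ)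

def fi (hi : i + 1 < ℓ) : Fin ℓ := ⟨i, lt_trans (Nat.lt_succ_self i) hi⟩
def fi1 (hi : i + 1 < ℓ) : Fin ℓ := ⟨i + 1, hi⟩

def τ (hi : i + 1 < ℓ) : Equiv.Perm (Fin ℓ) := Equiv.swap (fi hi) (fi1 hi)

lemma tau_fi : τ hi (fi hi) = fi1 hi := Equiv.swap_apply_left _ _
lemma tau_fi1 : τ hi (fi1 hi) = fi hi := Equiv.swap_apply_right _ _
lemma tau_other {k : Fin ℓ} (h1 : (k : ℕ) ≠ i) (h2 : (k : ℕ) ≠ i + 1) : τ hi k = k :=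
  Equiv.swap_apply_of_ne_of_ne (fun h => h1 (by rw [h]; rfl)) (fun h => h2 (by rw [h]; rfl))

lemma tau_symm : (τ hi).symm = τ hi := Equiv.symm_swap _ _

lemma pre_tau_tau (x : Fin ℓ → ZMod 2) : pre (τ hi) (pre (τ hi) x) = x := by
  funext j; simp [pre, τ, Equiv.swap_apply_self]

variable (h : (Fin ℓ → ZMod 2) → (Fin ℓ → ZMod 2))

/-- L2: `S h (i+1) ⊆ S (h ∘ pre (τ hi)) i` -/
lemma L2 : S h (i + 1) ⊆ S (h ∘ pre (τ hi)) i := by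
  rintro d ⟨x, y, ha, hb, rfl⟩
  refine ⟨pre (τ hi) x, pre (τ hi) y, ?_, ?_, ?_⟩
  · intro j hj
    have hj1 : (j : ℕ) ≠ i := Nat.ne_of_lt hj
    have hj2 : (j : ℕ) ≠ i + 1 := by omega
    simp only [pre, tau_other hi hj1 hj2]
    exact ha j (by omega)
  · intro j hj
    have : j = fi hi := Fin.ext hj
    subst this
    simp only [pre, tau_fi]
    exact hb (fi1 hi) rfl
  · simp only [Function.comp_apply, pre_tau_tau]

lemma L3 : ∀ d ∈ S (h ∘ pre (τ hi)) i, d ∈ S h i ∨ d ∈ S h (i + 1) := by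
  rintro d ⟨x, y, ha, hb, rfl⟩
  set X := pre (τ hi) x with hX
  set Y := pre (τ hi) y with hY
  have hagree : ∀ j : Fin ℓ, (j : ℕ) < i → X j = Y j := by
    intro j hj
    have hj1 : (j : ℕ) ≠ i := Nat.ne_of_lt hj
    have hj2 : (j : ℕ) ≠ i + 1 := by omega
    simp only [hX, hY, pre, tau_other hi hj1 hj2]
    exact ha j hj
  have hXi1 : X (fi1 hi) = 0 := by
    simp only [hX, pre, tau_fi1]
    exact (hb (fi hi) rfl).1
  have hYi1 : Y (fi1 hi) = 1 := by
    simp only [hY, pre, tau_fi1]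
    exact (hb (fi hi) rfl).2
  have hd : hammingDist ((h ∘ pre (τ hi)) x) ((h ∘ pre (τ hi)) y) = hammingDist (h X) (h Y) := rfl
  have two : ∀ a : ZMod 2, a = 0 ∨ a = 1 := by decide
  have fival : ((fi hi : Fin ℓ) : ℕ) = i := rfl
  have fi1val : ((fi1 hi : Fin ℓ) : ℕ) = i + 1 := rfl
  by_cases heq : X (fi hi) = Y (fi hi)
  · right
    refine ⟨X, Y, ?_, ?_, hd⟩
    · intro j hj
      rcases Nat.lt_or_ge (j : ℕ) i with hlt | hge
      · exact hagree j hlt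
      · have : (j : ℕ) = i := by omega
        have : j = fi hi := Fin.ext this
        subst this; exact heq
    · intro j hj
      have : j = fi1 hi := Fin.ext hj
      subst this; exact ⟨hXi1, hYi1⟩
  · left
    rcases two (X (fi hi)) with h0 | h1
    · -- X fi = 0, so Y fi = 1
      have hY1 : Y (fi hi) = 1 := by
        rcases two (Y (fi hi)) with hh | hh
        · exact absurd (h0.trans hh.symm) heq
        · exact hh
      refine ⟨X, Y, hagree, ?_, hd⟩
      intro j hj
      have : j = fi hi := Fin.ext hj
      subst this; exact ⟨h0, hY1⟩
    · -- X fi = 1, so Y fi = 0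
      have hY0 : Y (fi hi) = 0 := by
        rcases two (Y (fi hi)) with hh | hh
        · exact hh
        · exact absurd (h1.trans hh.symm) heq
      refine ⟨Y, X, fun j hj => (hagree j hj).symm, ?_, hd.trans (hammingDist_comm _ _)⟩
      intro j hj
      have : j = fi hi := Fin.ext hj
      subst this; exact ⟨hY0, h1⟩

lemma L4 : S (h ∘ pre (τ hi)) (i + 1) ⊆ S h i := by
  rintro d ⟨x, y, ha, hb, rfl⟩
  refine ⟨pre (τ hi) x, pre (τ hi) y, ?_, ?_, rfl⟩
  · intro j hj
    have hj1 : (j : ℕ) ≠ i := Nat.ne_of_lt hj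
    have hj2 : (j : ℕ) ≠ i + 1 := by omega
    simp only [pre, tau_other hi hj1 hj2]
    exact ha j (by omega)
  · intro j hj
    have : j = fi hi := Fin.ext hj
    subst this
    simp only [pre, tau_fi]
    exact hb (fi1 hi) rfl

lemma L1aux {j : ℕ} (hj1 : j ≠ i) (hj2 : j ≠ i + 1) :
    S (h ∘ pre (τ hi)) j ⊆ S h j := by
  rintro d ⟨x, y, ha, hb, rfl⟩
  refine ⟨pre (τ hi) x, pre (τ hi) y, ?_, ?_, rfl⟩
  · intro k hk
    simp only [pre]
    by_cases hk1 : (k : ℕ) = i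
    · have hij : i + 1 < j := by omega
      have : k = fi hi := Fin.ext hk1
      subst this
      rw [tau_fi]
      exact ha (fi1 hi) hij
    · by_cases hk2 : (k : ℕ) = i + 1
      · have hij : i < j := by omega
        have : k = fi1 hi := Fin.ext hk2
        subst this
        rw [tau_fi1]
        exact ha (fi hi) hij
      · rw [tau_other hi hk1 hk2]
        exact ha k hk
  · intro k hk
    have hk1 : (k : ℕ) ≠ i := by omega
    have hk2 : (k : ℕ) ≠ i + 1 := by omega
    simp only [pre, tau_other hi hk1 hk2]
    exact hb k hk

lemma L1 {j : ℕ} (hj1 : j ≠ i) (hj2 : j ≠ i + 1) :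
    S (h ∘ pre (τ hi)) j = S h j := by
  refine Set.Subset.antisymm (L1aux hi h hj1 hj2) ?_
  have hcomp : (h ∘ pre (τ hi)) ∘ pre (τ hi) = h := by
    funext x; simp only [Function.comp_apply, pre_tau_tau]
  have := L1aux hi (h ∘ pre (τ hi)) hj1 hj2
  rwa [hcomp] at this

lemma pd_swap_other {j : ℕ} (hj1 : j ≠ i) (hj2 : j ≠ i + 1) :
    partialDist (h ∘ pre (τ hi)) j = partialDist h j := by
  rw [pd_eq, pd_eq, L1 hi h hj1 hj2]

lemma pd_swap_le : partialDist (h ∘ pre (τ hi)) i ≤ partialDist h (i + 1) :=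
  Nat.sInf_le (L2 hi h (Nat.sInf_mem (S_nonempty h (i + 1))))

lemma pd_swap_ge_min :
    min (partialDist h i) (partialDist h (i + 1)) ≤ partialDist (h ∘ pre (τ hi)) i := by
  rcases L3 hi h _ (Nat.sInf_mem (S_nonempty (h ∘ pre (τ hi)) i)) with hm | hm
  · exact (min_le_left _ _).trans (Nat.sInf_le hm)
  · exact (min_le_right _ _).trans (Nat.sInf_le hm)

lemma pd_swap_i1 : partialDist h i ≤ partialDist (h ∘ pre (τ hi)) (i + 1) :=
  Nat.sInf_le (L4 hi h (Nat.sInf_mem (S_nonempty (h ∘ pre (τ hi)) (i + 1))))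

end Swap

lemma prod_le_of_eq_off {f h : ℕ → ℕ} {n i : ℕ} (hi : i + 1 < n)
    (heq : ∀ j, j ≠ i → j ≠ i + 1 → f j = h j)
    (hmul : f i * f (i + 1) ≤ h i * h (i + 1)) :
    ∏ j ∈ Finset.range n, f j ≤ ∏ j ∈ Finset.range n, h j := by
  have hmem : i ∈ Finset.range n := Finset.mem_range.mpr (by omega)
  have hmem1 : i + 1 ∈ (Finset.range n).erase i :=
    Finset.mem_erase.mpr ⟨by omega, Finset.mem_range.mpr hi⟩
  have hrw : ∀ F : ℕ → ℕ, ∏ j ∈ Finset.range n, F j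
      = F i * (F (i + 1) * ∏ j ∈ ((Finset.range n).erase i).erase (i + 1), F j) := by
    intro F
    rw [← Finset.mul_prod_erase _ F hmem, ← Finset.mul_prod_erase _ F hmem1]
  rw [hrw f, hrw h, ← mul_assoc, ← mul_assoc]
  have htail : ∏ j ∈ ((Finset.range n).erase i).erase (i + 1), f j
      = ∏ j ∈ ((Finset.range n).erase i).erase (i + 1), h j := by
    refine Finset.prod_congr rfl ?_
    intro j hj
    have hj1 := (Finset.mem_erase.mp hj).1
    have hj2 := (Finset.mem_erase.mp (Finset.mem_erase.mp hj).2).1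
    exact heq j hj2 hj1
  rw [htail]
  exact Nat.mul_le_mul_right _ hmul

lemma sum_lt_of_eq_off {f h : ℕ → ℕ} {n i : ℕ} (hi : i + 1 < n)
    (heq : ∀ j, j ≠ i → j ≠ i + 1 → f j = h j)
    (hadd : f i + f (i + 1) < h i + h (i + 1)) :
    ∑ j ∈ Finset.range n, f j < ∑ j ∈ Finset.range n, h j := by
  have hmem : i ∈ Finset.range n := Finset.mem_range.mpr (by omega)
  have hmem1 : i + 1 ∈ (Finset.range n).erase i :=
    Finset.mem_erase.mpr ⟨by omega, Finset.mem_range.mpr hi⟩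
  have hrw : ∀ F : ℕ → ℕ, ∑ j ∈ Finset.range n, F j
      = F i + (F (i + 1) + ∑ j ∈ ((Finset.range n).erase i).erase (i + 1), F j) := by
    intro F
    rw [← Finset.add_sum_erase _ F hmem, ← Finset.add_sum_erase _ F hmem1]
  rw [hrw f, hrw h, ← add_assoc, ← add_assoc]
  have htail : ∑ j ∈ ((Finset.range n).erase i).erase (i + 1), f j
      = ∑ j ∈ ((Finset.range n).erase i).erase (i + 1), h j := by
    refine Finset.sum_congr rfl ?_
    intro j hj
    have hj1 := (Finset.mem_erase.mp hj).1
    have hj2 := (Finset.mem_erase.mp (Finset.mem_erase.mp hj).2).1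
    exact heq j hj2 hj1
  rw [htail]
  exact Nat.add_lt_add_right hadd _

end PDaux


open PDaux in
theorem exists_nondecreasing_kernel {ℓ : ℕ}
    (g : (Fin ℓ → ZMod 2) → (Fin ℓ → ZMod 2)) (hg : Function.Bijective g) :
    ∃ g' : (Fin ℓ → ZMod 2) → (Fin ℓ → ZMod 2), Function.Bijective g' ∧
      (∀ i, i + 1 < ℓ → partialDist g' i ≤ partialDist g' (i + 1)) ∧
      ∏ i ∈ Finset.range ℓ, partialDist g i ≤ ∏ i ∈ Finset.range ℓ, partialDist g' i := by
  classical
  let G : Equiv.Perm (Fin ℓ) → (Fin ℓ → ZMod 2) → (Fin ℓ → ZMod 2) := fun σ => g ∘ pre σ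
  let P : Equiv.Perm (Fin ℓ) → ℕ := fun σ => ∏ j ∈ Finset.range ℓ, partialDist (G σ) j
  let M : Equiv.Perm (Fin ℓ) → ℕ :=
    fun σ => ∑ j ∈ Finset.range ℓ, partialDist (G σ) j * (ℓ + 1) ^ (ℓ - j)
  obtain ⟨σm, hσm⟩ := Finite.exists_max P
  haveI : Nonempty {σ : Equiv.Perm (Fin ℓ) // P σ = P σm} := ⟨⟨σm, rfl⟩⟩
  obtain ⟨⟨σ0, hP0⟩, hmin⟩ :=
    Finite.exists_min (fun t : {σ : Equiv.Perm (Fin ℓ) // P σ = P σm} => M t.1)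
  refine ⟨G σ0, hg.comp (pre_bijective σ0), ?_, ?_⟩
  · intro i hi
    by_contra hcon
    push_neg at hcon
    set σ1 : Equiv.Perm (Fin ℓ) := σ0.trans (τ hi) with hσ1
    have hG1 : G σ1 = G σ0 ∘ pre (τ hi) := rfl
    have e1 : partialDist (G σ1) i = partialDist (G σ0) (i + 1) := by
      refine le_antisymm (hG1 ▸ pd_swap_le hi (G σ0)) ?_
      have := hG1 ▸ pd_swap_ge_min hi (G σ0)
      rwa [min_eq_right (le_of_lt hcon)] at this
    have e2 : partialDist (G σ0) i ≤ partialDist (G σ1) (i + 1) :=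
      hG1 ▸ pd_swap_i1 hi (G σ0)
    have e3 : ∀ j, j ≠ i → j ≠ i + 1 → partialDist (G σ1) j = partialDist (G σ0) j := by
      intro j h1 h2
      exact hG1 ▸ pd_swap_other hi (G σ0) h1 h2
    have hPle : P σ0 ≤ P σ1 := by
      refine prod_le_of_eq_off hi (fun j h1 h2 => (e3 j h1 h2).symm) ?_
      rw [e1, Nat.mul_comm]
      exact Nat.mul_le_mul_left _ e2
    have hP1 : P σ1 = P σm := le_antisymm (hσm σ1) (hP0 ▸ hPle)
    have hMlt : M σ1 < M σ0 := by
      refine sum_lt_of_eq_off hi (fun j h1 h2 => by rw [e3 j h1 h2]) ?_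
      set a := partialDist (G σ0) i
      set b := partialDist (G σ0) (i + 1)
      set e := partialDist (G σ1) (i + 1)
      have he : e ≤ ℓ := pd_le_card _ _
      have hba : b + 1 ≤ a := hcon
      have hw : 1 ≤ (ℓ + 1) ^ (ℓ - (i + 1)) := Nat.one_le_pow _ _ (by omega)
      have hwi : (ℓ + 1) ^ (ℓ - i) = (ℓ + 1) ^ (ℓ - (i + 1)) * (ℓ + 1) := by
        rw [← pow_succ]
        congr 1
        omega
      rw [e1, hwi]
      set w := (ℓ + 1) ^ (ℓ - (i + 1))
      have h1 : (b + 1) * (w * (ℓ + 1)) ≤ a * (w * (ℓ + 1)) := Nat.mul_le_mul_right _ hba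
      have h2 : e * w ≤ ℓ * w := Nat.mul_le_mul_right _ he
      nlinarith [h1, h2, hw]
    exact absurd (hmin ⟨σ1, hP1⟩) (not_le.mpr hMlt)
  · have hGid : G 1 = g := by
      funext x
      rfl
    have h1 : P 1 ≤ P σm := hσm 1
    have h2 : P 1 = ∏ i ∈ Finset.range ℓ, partialDist g i := by
      simp only [P, hGid]
    calc ∏ i ∈ Finset.range ℓ, partialDist g i = P 1 := h2.symm
      _ ≤ P σm := h1
      _ = P σ0 := hP0.symm
      _ = ∏ i ∈ Finset.range ℓ, partialDist (G σ0) i := rfl
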